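/- (Preliminary Lemma, vanishing-period case.) Fix 0 < r₀ < 1, let V = {z ∈ ℂ : r₀ < |z| < 1/r₀}, and for g : ℂ → ℂ set g̃(z) := conj( g( 1/conj(z) ) ). Let c₁, c_w, c₁′, c_w′ : ℂ → ℂ be complex differentiable on V with c₁(1) = c_w(1) and c₁′(1) = c_w′(1). For n ∈ ℕ define p_n(z) := ( z^{n+1} c₁(z) − z^{−n} c_w(z) ) / (z − 1) for z ∈ V \ {1}, extended to z = 1 by its limit (the extension across 1 exists and is complex differentiable on V since c₁(1) = c_w(1)); define p′_n analogously from c₁′, c_w′. Fix r with r₀ < r < 1. Then, as n → ∞, ∮_{|z|=1} p_n(z)·conj(p′_n(z)) dz/z − [ ∮_{|z|=r} ( c₁(z)·c̃₁′(z) + c_w(z)·c̃_w′(z) ) / ((1 − z)(1 − z^{−1})) dz/z − 2πi·D + 2πi(2n+1)·c_w(1)·conj(c₁′(1)) ] tends to 0, where D is the complex derivative at z = 1 of the function z ↦ c_w(z)·c̃₁′(z). -/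

import Mathlib

open Complex Metric Set Filter Topology

/-- Antiholomorphic reflection in the unit circle: `g̃(z) = conj (g (1 / conj z))`. -/
noncomputable def tilde (g : ℂ → ℂ) : ℂ → ℂ :=
  fun z => (starRingEnd ℂ) (g (1 / (starRingEnd ℂ) z))

lemma conj_conj_hasDerivAt {g : ℂ → ℂ} {w d : ℂ} (h : HasDerivAt g d w) :
    HasDerivAt (fun z => (starRingEnd ℂ) (g ((starRingEnd ℂ) z))) ((starRingEnd ℂ) d)
      ((starRingEnd ℂ) w) := by
  rw [hasDerivAt_iff_tendsto_slope] at h ⊢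
  have hct : Filter.Tendsto (starRingEnd ℂ) (𝓝[≠] ((starRingEnd ℂ) w)) (𝓝[≠] w) := by
    rw [tendsto_nhdsWithin_iff]
    constructor
    · have := (Complex.continuous_conj.tendsto ((starRingEnd ℂ) w))
      exact (by simpa using this : Tendsto (starRingEnd ℂ) (𝓝 ((starRingEnd ℂ) w)) (𝓝 w)).mono_left nhdsWithin_le_nhds
    · filter_upwards [self_mem_nhdsWithin] with z hz
      simp only [mem_compl_iff, mem_singleton_iff] at hz ⊢
      intro hc
      apply hz
      have := congrArg (starRingEnd ℂ) hc
      simpa using this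
  have hc2 : Filter.Tendsto (starRingEnd ℂ) (𝓝 d) (𝓝 ((starRingEnd ℂ) d)) :=
    Complex.continuous_conj.tendsto d
  have := hc2.comp (h.comp hct)
  refine this.congr fun z => ?_
  simp only [Function.comp_apply, slope_def_field, map_div₀, map_sub, Complex.conj_conj]

lemma circleIntegral_add' {f g : ℂ → ℂ} {c : ℂ} {R : ℝ} (hf : CircleIntegrable f c R)
    (hg : CircleIntegrable g c R) :
    (∮ z in C(c, R), (f z + g z)) = (∮ z in C(c, R), f z) + ∮ z in C(c, R), g z := by
  simp only [circleIntegral, smul_add, intervalIntegral.integral_add hf.out hg.out]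

lemma tilde_eq (g : ℂ → ℂ) :
    tilde g = (fun u => (starRingEnd ℂ) (g ((starRingEnd ℂ) u))) ∘ (fun z : ℂ => z⁻¹) := by
  funext z
  simp [tilde, one_div, Function.comp]

lemma tilde_diffAt {g : ℂ → ℂ} {z : ℂ} (hz : z ≠ 0)
    (hg : DifferentiableAt ℂ g (1 / (starRingEnd ℂ) z)) :
    DifferentiableAt ℂ (tilde g) z := by
  have h2 := conj_conj_hasDerivAt hg.hasDerivAt
  have hz' : (starRingEnd ℂ) (1 / (starRingEnd ℂ) z) = z⁻¹ := by
    simp [map_div₀, one_div]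
  rw [hz'] at h2
  rw [tilde_eq]
  exact h2.differentiableAt.comp z (differentiableAt_inv hz)


lemma alg_core (z u w A B T Tw : ℂ) (hz0 : z ≠ 0) (hu : u ≠ 0) (hw : w ≠ 0) :
    ((z * u * A - u⁻¹ * B) / w) * (((z * u)⁻¹ * T - u * Tw) / (-w / z)) / z
    = (A * T + B * Tw) / (-w * (w / z)) / z
      + u * u * z * (A * Tw) * (w ^ 2)⁻¹
      + (u * u * z)⁻¹ * (B * T) * (w ^ 2)⁻¹ := by
  have huw : u * w ≠ 0 := mul_ne_zero hu hw
  have hnuw : -(u * w) ≠ 0 := neg_ne_zero.mpr huw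
  have hw2 : (w:ℂ) ^ 2 ≠ 0 := pow_ne_zero _ hw
  have hu2z : u * u * z ≠ 0 := mul_ne_zero (mul_ne_zero hu hu) hz0
  have ha : z * u * A - u⁻¹ * B = (z * u * u * A - B) / u := by
    field_simp
  have hb : (z * u)⁻¹ * T - u * Tw = (T - z * u * u * Tw) / (z * u) := by
    field_simp
  rw [ha, hb, div_div, div_div]
  have hc1 : z * u * (-w / z) = -(u * w) := by
    field_simp
  have hc2 : -w * (w / z) * z = -(w * w) := by
    field_simp
  rw [hc1, div_mul_div_comm, div_div, div_div, hc2]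
  rw [inv_mul_eq_div, ← div_eq_mul_inv, ← div_eq_mul_inv, div_div]
  have h1 : u * w * -(u * w) * z ≠ 0 := mul_ne_zero (mul_ne_zero huw hnuw) hz0
  have h2 : -(w * w) ≠ 0 := neg_ne_zero.mpr (mul_ne_zero hw hw)
  have h3 : u * u * z * w ^ 2 ≠ 0 := mul_ne_zero hu2z hw2
  rw [div_add_div _ _ h2 hw2, div_add_div _ _ (mul_ne_zero h2 hw2) h3,
    div_eq_div_iff h1 (mul_ne_zero (mul_ne_zero h2 hw2) h3)]
  ring

lemma alg_dec (a c d w : ℂ) (hw : w ≠ 0) :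
    a * (w ^ 2)⁻¹ = ((a - c) / w - d) / w + (d * w⁻¹ + c * (w ^ 2)⁻¹) := by
  field_simp
  ring

theorem stmt13 (r₀ r : ℝ) (h0 : 0 < r₀) (h1 : r₀ < 1) (hr0 : r₀ < r) (hr1 : r < 1)
    (V : Set ℂ) (hV : V = {z : ℂ | r₀ < ‖z‖ ∧ ‖z‖ < 1 / r₀})
    (c₁ cw c₁' cw' : ℂ → ℂ)
    (hc₁ : DifferentiableOn ℂ c₁ V) (hcw : DifferentiableOn ℂ cw V)
    (hc₁' : DifferentiableOn ℂ c₁' V) (hcw' : DifferentiableOn ℂ cw' V)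
    (heq : c₁ 1 = cw 1) (heq' : c₁' 1 = cw' 1) :
    Filter.Tendsto
      (fun n : ℕ =>
        (∮ z in C(0, 1),
          ((z ^ (n + 1) * c₁ z - z ^ (-(n : ℤ)) * cw z) / (z - 1)) *
            (starRingEnd ℂ) ((z ^ (n + 1) * c₁' z - z ^ (-(n : ℤ)) * cw' z) / (z - 1)) / z) -
        ((∮ z in C(0, r),
            (c₁ z * tilde c₁' z + cw z * tilde cw' z) / ((1 - z) * (1 - z⁻¹)) / z) -
          2 * Real.pi * Complex.I * deriv (fun z => cw z * tilde c₁' z) 1 +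
          2 * Real.pi * Complex.I * (2 * (n : ℂ) + 1) * cw 1 * (starRingEnd ℂ) (c₁' 1)))
      Filter.atTop (nhds 0) := by
  have hr : 0 < r := h0.trans hr0
  have hinv1 : (1:ℝ) < 1 / r₀ := by rw [lt_div_iff₀ h0]; simpa using h1
  set R : ℝ := r⁻¹ with hRdef
  have hR1 : 1 < R := by
    rw [hRdef]
    rw [lt_inv_comm₀ one_pos hr]
    simpa using hr1
  have hRlt : R < 1 / r₀ := by
    rw [hRdef, one_div]
    exact inv_strictAnti₀ h0 hr0
  have hR0 : 0 < R := lt_trans one_pos hR1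
  have hrR : r ≤ R := le_of_lt (lt_trans hr1 hR1)
  -- basic facts about V
  have hVopen : IsOpen V := by
    rw [hV]
    have : {z : ℂ | r₀ < ‖z‖ ∧ ‖z‖ < 1/r₀} =
        (fun z : ℂ => ‖z‖) ⁻¹' (Set.Ioi r₀) ∩ (fun z : ℂ => ‖z‖) ⁻¹' (Set.Iio (1/r₀)) := rfl
    rw [this]
    exact (isOpen_Ioi.preimage continuous_norm).inter
      (isOpen_Iio.preimage continuous_norm)
  have hmemV : ∀ z : ℂ, r₀ < ‖z‖ → ‖z‖ < 1/r₀ → z ∈ V := by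
    intro z hz1 hz2; rw [hV]; exact ⟨hz1, hz2⟩
  have h1V : (1:ℂ) ∈ V := hmemV 1 (by simpa using h1) (by simpa using hinv1)
  have h1nhds : V ∈ 𝓝 (1:ℂ) := hVopen.mem_nhds h1V
  have hV0 : ∀ z ∈ V, z ≠ 0 := by
    intro z hz h
    rw [hV] at hz
    rw [h] at hz
    simp at hz
    linarith [hz.1]
  have habsV : ∀ z ∈ V, r₀ < ‖z‖ ∧ ‖z‖ < 1/r₀ := by
    intro z hz; rw [hV] at hz; exact hz
  have hVconj : ∀ z ∈ V, (1 / (starRingEnd ℂ) z) ∈ V := by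
    intro z hz
    obtain ⟨ha, hb⟩ := habsV z hz
    have h0z : 0 < ‖z‖ := lt_trans h0 ha
    have habs : ‖1 / (starRingEnd ℂ) z‖ = 1 / ‖z‖ := by
      rw [norm_div, norm_one, Complex.norm_conj]
    apply hmemV
    · rw [habs]
      rw [lt_div_iff₀ h0z]
      calc r₀ * ‖z‖ < r₀ * (1/r₀) := by
            exact mul_lt_mul_of_pos_left hb h0
        _ = 1 := by field_simp
    · rw [habs, div_lt_div_iff₀ h0z h0, one_mul]
      nlinarith
  -- tilde preserves differentiability on V
  have htilde : ∀ g : ℂ → ℂ, DifferentiableOn ℂ g V → DifferentiableOn ℂ (tilde g) V := by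
    intro g hg z hz
    exact (tilde_diffAt (hV0 z hz)
      ((hg _ (hVconj z hz)).differentiableAt (hVopen.mem_nhds (hVconj z hz)))).differentiableWithinAt
  -- annuli inside V
  have hsubV : ∀ {a b : ℝ}, r₀ < a → b < 1/r₀ → (closedBall (0:ℂ) b \ ball 0 a) ⊆ V := by
    intro a b ha hb z hz
    obtain ⟨hz1, hz2⟩ := hz
    rw [mem_closedBall, dist_zero_right] at hz1
    rw [mem_ball, dist_zero_right, not_lt] at hz2
    exact hmemV z (lt_of_lt_of_le ha hz2) (lt_of_le_of_lt hz1 hb)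
  have hsphereV : ∀ {ρ : ℝ}, r₀ < ρ → ρ < 1/r₀ → sphere (0:ℂ) ρ ⊆ V := by
    intro ρ ha hb z hz
    rw [mem_sphere, dist_zero_right] at hz
    exact hmemV z (by rw [← hz] at ha; exact ha) (by rw [← hz] at hb; exact hb)
  have hsr : sphere (0:ℂ) r ⊆ V := hsphereV hr0 (lt_trans hr1 hinv1)
  have hsR : sphere (0:ℂ) R ⊆ V := hsphereV (lt_trans h1 hR1) hRlt
  -- the function h := cw * tilde c₁'
  set hfun : ℂ → ℂ := fun z => cw z * tilde c₁' z with hhfun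
  have hhdiffV : DifferentiableOn ℂ hfun V := hcw.mul (htilde _ hc₁')
  have hhdiff1 : DifferentiableAt ℂ hfun 1 := (hhdiffV 1 h1V).differentiableAt h1nhds
  have htc₁'1 : tilde c₁' 1 = (starRingEnd ℂ) (c₁' 1) := by simp [tilde]
  -- the two error integrals
  set I₁ : ℕ → ℂ := fun n => ∮ z in C(0, r),
    z ^ (2*n+1) * (c₁ z * tilde cw' z) * ((z-1)^2)⁻¹ with hI₁
  set I₂ : ℕ → ℂ := fun n => ∮ z in C(0, R),
    z ^ (-(2*(n:ℤ)+1)) * (cw z * tilde c₁' z) * ((z-1)^2)⁻¹ with hI₂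
  -- nonvanishing and continuity facts on spheres
  have hne1r : ∀ z ∈ sphere (0:ℂ) r, z ≠ 1 := by
    intro z hz h1z
    rw [mem_sphere, dist_zero_right, h1z] at hz
    simp at hz
    rw [← hz] at hr1
    simp at hr1
  have hne1R : ∀ z ∈ sphere (0:ℂ) R, z ≠ 1 := by
    intro z hz h1z
    rw [mem_sphere, dist_zero_right, h1z] at hz
    simp at hz
    rw [← hz] at hR1
    simp at hR1
  have hne0r : ∀ z ∈ sphere (0:ℂ) r, z ≠ 0 := fun z hz => hV0 z (hsr hz)
  have hsqcont : ∀ {ρ : ℝ}, (∀ z ∈ sphere (0:ℂ) ρ, z ≠ 1) →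
      ContinuousOn (fun z : ℂ => ((z-1)^2)⁻¹) (sphere 0 ρ) := fun hne =>
    ((continuousOn_id.sub continuousOn_const).pow 2).inv₀
      (fun z hz => pow_ne_zero _ (sub_ne_zero.mpr (hne z hz)))
  have hinvcont : ∀ {ρ : ℝ}, (∀ z ∈ sphere (0:ℂ) ρ, z ≠ 1) →
      ContinuousOn (fun z : ℂ => (z-1)⁻¹) (sphere 0 ρ) := fun hne =>
    (continuousOn_id.sub continuousOn_const).inv₀
      (fun z hz => sub_ne_zero.mpr (hne z hz))
  have hcont : ∀ {ρ : ℝ}, sphere (0:ℂ) ρ ⊆ V → ∀ {g : ℂ → ℂ}, DifferentiableOn ℂ g V →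
      ContinuousOn g (sphere 0 ρ) := by
    intro ρ hρ g hg
    exact hg.continuousOn.mono hρ
  have key : ∀ n : ℕ,
      ((∮ z in C(0, 1),
          ((z ^ (n + 1) * c₁ z - z ^ (-(n : ℤ)) * cw z) / (z - 1)) *
            (starRingEnd ℂ) ((z ^ (n + 1) * c₁' z - z ^ (-(n : ℤ)) * cw' z) / (z - 1)) / z) -
        ((∮ z in C(0, r),
            (c₁ z * tilde c₁' z + cw z * tilde cw' z) / ((1 - z) * (1 - z⁻¹)) / z) -
          2 * Real.pi * Complex.I * deriv (fun z => cw z * tilde c₁' z) 1 +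
          2 * Real.pi * Complex.I * (2 * (n : ℂ) + 1) * cw 1 * (starRingEnd ℂ) (c₁' 1))) =
      I₁ n + I₂ n := by
    intro n
    set m : ℤ := -(2*(n:ℤ)+1) with hm
    set Nf : ℂ → ℂ := fun z => z^(n+1) * c₁ z - z^(-(n:ℤ)) * cw z with hNfdef
    set Ng : ℂ → ℂ := fun z => z^(n+1) * c₁' z - z^(-(n:ℤ)) * cw' z with hNgdef
    set p : ℂ → ℂ := dslope Nf 1 with hpdef
    set q : ℂ → ℂ := dslope Ng 1 with hqdef
    set hn : ℂ → ℂ := fun z => z ^ m * hfun z with hhndef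
    set d1 : ℂ := deriv hn 1 with hd1def
    set Q : ℂ → ℂ := dslope (dslope hn 1) 1 with hQdef
    -- differentiability
    have hzpowV : ∀ k : ℤ, DifferentiableOn ℂ (fun z : ℂ => z ^ k) V := fun k z hz =>
      ((differentiableAt_zpow.mpr (Or.inl (hV0 z hz)))).differentiableWithinAt
    have hpowV : DifferentiableOn ℂ (fun z : ℂ => z ^ (n+1)) V :=
      (differentiable_pow (n+1)).differentiableOn
    have hNfd : DifferentiableOn ℂ Nf V := (hpowV.mul hc₁).sub ((hzpowV _).mul hcw)
    have hNgd : DifferentiableOn ℂ Ng V := (hpowV.mul hc₁').sub ((hzpowV _).mul hcw')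
    have hpd : DifferentiableOn ℂ p V := (Complex.differentiableOn_dslope h1nhds).mpr hNfd
    have hqd : DifferentiableOn ℂ q V := (Complex.differentiableOn_dslope h1nhds).mpr hNgd
    have htqd : DifferentiableOn ℂ (tilde q) V := htilde _ hqd
    have hFd : DifferentiableOn ℂ (fun z => p z * tilde q z / z) V :=
      (hpd.mul htqd).div differentiableOn_id hV0
    have hhnd : DifferentiableOn ℂ hn V := (hzpowV _).mul hhdiffV
    have hQd : DifferentiableOn ℂ Q V :=
      (Complex.differentiableOn_dslope h1nhds).mpr
        ((Complex.differentiableOn_dslope h1nhds).mpr hhnd)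
    -- values at 1
    have hNf1 : Nf 1 = 0 := by simp [hNfdef, heq]
    have hNg1 : Ng 1 = 0 := by simp [hNgdef, heq']
    have hpz : ∀ z : ℂ, z ≠ 1 → p z = Nf z / (z - 1) := by
      intro z hz
      rw [hpdef, dslope_of_ne _ hz, slope_def_field, hNf1, sub_zero]
    have hqz : ∀ z : ℂ, z ≠ 1 → q z = Ng z / (z - 1) := by
      intro z hz
      rw [hqdef, dslope_of_ne _ hz, slope_def_field, hNg1, sub_zero]
    have htqz : ∀ z : ℂ, z ≠ 0 → z ≠ 1 →
        tilde q z = ((z⁻¹)^(n+1) * tilde c₁' z - (z⁻¹)^(-(n:ℤ)) * tilde cw' z) / (z⁻¹ - 1) := by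
      intro z hz0 hz1
      have hcz : (starRingEnd ℂ) z ≠ 0 := by simpa using hz0
      have hu1 : (1 / (starRingEnd ℂ) z) ≠ 1 := by
        intro h
        rw [div_eq_iff hcz, one_mul] at h
        apply hz1
        have := congrArg (starRingEnd ℂ) h
        simpa using this.symm
      have hcu : (starRingEnd ℂ) (1 / (starRingEnd ℂ) z) = z⁻¹ := by
        simp [map_div₀, one_div]
      show (starRingEnd ℂ) (q (1 / (starRingEnd ℂ) z)) = _
      rw [hqz _ hu1, hNgdef]
      rw [map_div₀, map_sub, map_sub, map_mul, map_mul, map_pow, map_zpow₀, map_one, hcu]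
      rfl
    -- Step 1 : regularize the integrand on the unit circle
    have E1 : (∮ z in C(0, 1),
          ((z ^ (n + 1) * c₁ z - z ^ (-(n : ℤ)) * cw z) / (z - 1)) *
            (starRingEnd ℂ) ((z ^ (n + 1) * c₁' z - z ^ (-(n : ℤ)) * cw' z) / (z - 1)) / z)
        = ∮ z in C(0, 1), p z * tilde q z / z := by
      simp only [circleIntegral]
      apply intervalIntegral.integral_congr_ae
      have hcount : (circleMap 0 1 ⁻¹' {1}).Countable :=
        (Set.countable_singleton (1:ℂ)).preimage_circleMap 0 one_ne_zero
      filter_upwards [hcount.ae_notMem MeasureTheory.volume] with θ hθ _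
      have hz1 : circleMap 0 1 θ ≠ 1 := hθ
      set z := circleMap 0 1 θ with hzdef
      have habs : ‖z‖ = 1 := by
        rw [hzdef, norm_circleMap_zero]; norm_num
      have hz0 : z ≠ 0 := by
        intro h; rw [h] at habs; simp at habs
      have hconjz : (starRingEnd ℂ) z = z⁻¹ := by
        have hmul : z * (starRingEnd ℂ) z = 1 := by
          rw [Complex.mul_conj, Complex.normSq_eq_norm_sq, habs]
          norm_num
        exact (inv_eq_of_mul_eq_one_right hmul).symm
      have htq1 : tilde q z = (starRingEnd ℂ) (Ng z / (z - 1)) := by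
        show (starRingEnd ℂ) (q (1 / (starRingEnd ℂ) z)) = _
        rw [hconjz, one_div, inv_inv, hqz z hz1]
      congr 1
      rw [hpz z hz1, htq1, hNfdef, hNgdef]
    -- Step 2 : move to radius r
    have hsub1 : closedBall (0:ℂ) 1 \ ball 0 r ⊆ V := hsubV hr0 hinv1
    have E2 : (∮ z in C(0,1), p z * tilde q z / z) = ∮ z in C(0,r), p z * tilde q z / z := by
      apply Complex.circleIntegral_eq_of_differentiable_on_annulus_off_countable hr hr1.le
        Set.countable_empty (hFd.continuousOn.mono hsub1)
      intro z hz
      have hzV : z ∈ V := hsub1 ⟨ball_subset_closedBall hz.1.1,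
        fun hb => hz.1.2 (ball_subset_closedBall hb)⟩
      exact (hFd z hzV).differentiableAt (hVopen.mem_nhds hzV)
    -- continuity and integrability of the pieces
    have hG1cont : ContinuousOn
        (fun z => (c₁ z * tilde c₁' z + cw z * tilde cw' z) / ((1 - z) * (1 - z⁻¹)) / z)
        (sphere 0 r) := by
      apply ContinuousOn.div _ continuousOn_id hne0r
      apply ContinuousOn.div
      · exact ((hcont hsr hc₁).mul (hcont hsr (htilde _ hc₁'))).add
          ((hcont hsr hcw).mul (hcont hsr (htilde _ hcw')))
      · exact (continuousOn_const.sub continuousOn_id).mul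
          (continuousOn_const.sub (continuousOn_id.inv₀ hne0r))
      · intro z hz
        apply mul_ne_zero
        · exact sub_ne_zero.mpr (Ne.symm (hne1r z hz))
        · rw [sub_ne_zero]
          intro h
          exact hne1r z hz (inv_eq_one.mp h.symm)
    have hG2cont : ContinuousOn
        (fun z => z ^ (2*n+1) * (c₁ z * tilde cw' z) * ((z-1)^2)⁻¹) (sphere 0 r) :=
      ((continuous_pow (2*n+1)).continuousOn.mul
        ((hcont hsr hc₁).mul (hcont hsr (htilde _ hcw')))).mul (hsqcont hne1r)
    have hG3cont_r : ContinuousOn (fun z => hn z * ((z-1)^2)⁻¹) (sphere 0 r) :=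
      (hcont hsr hhnd).mul (hsqcont hne1r)
    have hG3cont_R : ContinuousOn (fun z => hn z * ((z-1)^2)⁻¹) (sphere 0 R) :=
      (hcont hsR hhnd).mul (hsqcont hne1R)
    have hG1int := hG1cont.circleIntegrable hr.le
    have hG2int := hG2cont.circleIntegrable hr.le
    have hG12int : CircleIntegrable (fun z =>
        (c₁ z * tilde c₁' z + cw z * tilde cw' z) / ((1 - z) * (1 - z⁻¹)) / z
          + z ^ (2*n+1) * (c₁ z * tilde cw' z) * ((z-1)^2)⁻¹) 0 r :=
      (hG1cont.add hG2cont).circleIntegrable hr.le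
    have hG3int_r := hG3cont_r.circleIntegrable hr.le
    have hG3int_R := hG3cont_R.circleIntegrable hR0.le
    have hQint_r : CircleIntegrable Q 0 r :=
      ContinuousOn.circleIntegrable hr.le (hcont hsr hQd)
    have hQint_R : CircleIntegrable Q 0 R :=
      ContinuousOn.circleIntegrable hR0.le (hcont hsR hQd)
    have hrest_int : ∀ {ρ : ℝ}, 0 ≤ ρ → (∀ z ∈ sphere (0:ℂ) ρ, z ≠ 1) →
        CircleIntegrable (fun z => d1 * (z-1)⁻¹ + hn 1 * ((z-1)^2)⁻¹) 0 ρ := by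
      intro ρ hρ hne
      apply ContinuousOn.circleIntegrable hρ
      exact (continuousOn_const.mul (hinvcont hne)).add
        (continuousOn_const.mul (hsqcont hne))
    -- Step 3 : split the integrand at radius r
    have hFsplit : Set.EqOn (fun z => p z * tilde q z / z)
        (fun z => ((c₁ z * tilde c₁' z + cw z * tilde cw' z) / ((1 - z) * (1 - z⁻¹)) / z
          + z ^ (2*n+1) * (c₁ z * tilde cw' z) * ((z-1)^2)⁻¹)
          + hn z * ((z-1)^2)⁻¹) (sphere 0 r) := by
      intro z hz
      have hz1 := hne1r z hz
      have hz0 := hne0r z hz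
      have hw : z - 1 ≠ 0 := sub_ne_zero.mpr hz1
      simp only []
      rw [hpz z hz1, htqz z hz0 hz1, hNfdef]
      simp only [hhndef, hhfun, hm]
      have e1 : z ^ (n+1) = z * z^n := by ring
      have e2 : z ^ (-(n:ℤ)) = (z^n)⁻¹ := by
        rw [zpow_neg, zpow_natCast]
      have e3 : (z⁻¹) ^ (n+1) = (z * z^n)⁻¹ := by
        rw [inv_pow, e1]
      have e4 : (z⁻¹) ^ (-(n:ℤ)) = z^n := by
        rw [zpow_neg, inv_zpow, inv_inv, zpow_natCast]
      have e5 : z ^ (2*n+1) = z^n * z^n * z := by ring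
      have e6 : z ^ (-(2*(n:ℤ)+1)) = (z^n * z^n * z)⁻¹ := by
        rw [show (-(2*(n:ℤ)+1)) = -((2*n+1 : ℕ) : ℤ) by norm_cast, zpow_neg, zpow_natCast, e5]
      have e7 : (1:ℂ) - z = -(z - 1) := by ring
      have e8 : (1:ℂ) - z⁻¹ = (z-1) / z := by
        field_simp
      have e9 : z⁻¹ - 1 = -(z-1) / z := by
        field_simp
        ring
      rw [e1, e2, e3, e4, e5, e6, e7, e8, e9]
      exact alg_core z (z^n) (z-1) (c₁ z) (cw z) (tilde c₁' z) (tilde cw' z)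
        hz0 (pow_ne_zero _ hz0) hw
    have E3 : (∮ z in C(0,r), p z * tilde q z / z) =
        (∮ z in C(0,r), (c₁ z * tilde c₁' z + cw z * tilde cw' z) / ((1 - z) * (1 - z⁻¹)) / z)
        + (∮ z in C(0,r), z ^ (2*n+1) * (c₁ z * tilde cw' z) * ((z-1)^2)⁻¹)
        + (∮ z in C(0,r), hn z * ((z-1)^2)⁻¹) := by
      rw [circleIntegral.integral_congr hr.le hFsplit,
        circleIntegral_add' hG12int hG3int_r, circleIntegral_add' hG1int hG2int]
    -- partial fraction decomposition of the hn-term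
    have hdec : ∀ z : ℂ, z ≠ 1 → hn z * ((z-1)^2)⁻¹
        = Q z + (d1 * (z-1)⁻¹ + hn 1 * ((z-1)^2)⁻¹) := by
      intro z hz
      have hw : z - 1 ≠ 0 := sub_ne_zero.mpr hz
      have hQz : Q z = ((hn z - hn 1) / (z-1) - d1) / (z-1) := by
        rw [hQdef, dslope_of_ne _ hz, slope_def_field, dslope_of_ne _ hz, slope_def_field,
          dslope_same, hd1def]
      rw [hQz]
      exact alg_dec (hn z) (hn 1) d1 (z-1) hw
    -- elementary integrals
    have hsq_eq : (fun z : ℂ => ((z-1)^2)⁻¹) = fun z : ℂ => (z-1)^(-2:ℤ) := by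
      funext z
      rw [zpow_neg]
      norm_cast
    have hzero2 : ∀ ρ : ℝ, (∮ z in C(0, ρ), ((z-1)^2)⁻¹) = 0 := by
      intro ρ
      show circleIntegral (fun z : ℂ => ((z-1)^2)⁻¹) 0 ρ = 0
      rw [hsq_eq]
      exact circleIntegral.integral_sub_zpow_of_ne (by decide) 0 1 ρ
    have hinv_r : (∮ z in C(0, r), (z-1)⁻¹) = 0 := by
      apply Complex.circleIntegral_eq_zero_of_differentiable_on_off_countable hr.le
        Set.countable_empty
      · apply (continuousOn_id.sub continuousOn_const).inv₀
        intro z hz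
        rw [mem_closedBall, dist_zero_right] at hz
        refine sub_ne_zero.mpr fun h => ?_
        have hz1 : z = 1 := h
        rw [hz1] at hz
        simp at hz
        linarith
      · intro z hz
        have hz' : z ≠ 1 := by
          have := hz.1
          rw [mem_ball, dist_zero_right] at this
          intro h
          rw [h] at this
          simp at this
          linarith
        exact (differentiableAt_id.sub_const 1).inv (sub_ne_zero.mpr hz')
    have hinv_R : (∮ z in C(0, R), (z-1)⁻¹) = 2 * Real.pi * Complex.I := by
      apply circleIntegral.integral_sub_inv_of_mem_ball
      rw [mem_ball, dist_zero_right]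
      simpa using hR1
    -- Step 4 : at radius r the hn-term integrates to the integral of Q
    have E4 : (∮ z in C(0,r), hn z * ((z-1)^2)⁻¹) = ∮ z in C(0,r), Q z := by
      rw [circleIntegral.integral_congr hr.le (fun z hz => hdec z (hne1r z hz))]
      rw [circleIntegral_add' hQint_r (hrest_int hr.le hne1r)]
      rw [circleIntegral_add'
        (ContinuousOn.circleIntegrable (f := fun z => d1 * (z-1)⁻¹) hr.le (continuousOn_const.mul (hinvcont hne1r)))
        (ContinuousOn.circleIntegrable (f := fun z => hn 1 * ((z-1)^2)⁻¹) hr.le (continuousOn_const.mul (hsqcont hne1r)))]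
      rw [circleIntegral.integral_const_mul, circleIntegral.integral_const_mul,
        hinv_r, hzero2 r]
      ring
    -- Step 5 : move Q to radius R
    have hsub2 : closedBall (0:ℂ) R \ ball 0 r ⊆ V := hsubV hr0 hRlt
    have E5 : (∮ z in C(0,r), Q z) = ∮ z in C(0,R), Q z := by
      symm
      apply Complex.circleIntegral_eq_of_differentiable_on_annulus_off_countable hr hrR
        Set.countable_empty (hQd.continuousOn.mono hsub2)
      intro z hz
      have hzV : z ∈ V := hsub2 ⟨ball_subset_closedBall hz.1.1,
        fun hb => hz.1.2 (ball_subset_closedBall hb)⟩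
      exact (hQd z hzV).differentiableAt (hVopen.mem_nhds hzV)
    -- Step 6 : at radius R, pick up the residue
    have E6 : (∮ z in C(0,R), Q z)
        = (∮ z in C(0,R), hn z * ((z-1)^2)⁻¹) - d1 * (2 * Real.pi * Complex.I) := by
      have h := circleIntegral.integral_congr hR0.le
        (fun z hz => hdec z (hne1R z hz))
      rw [h, circleIntegral_add' hQint_R (hrest_int hR0.le hne1R)]
      rw [circleIntegral_add'
        (ContinuousOn.circleIntegrable (f := fun z => d1 * (z-1)⁻¹) hR0.le (continuousOn_const.mul (hinvcont hne1R)))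
        (ContinuousOn.circleIntegrable (f := fun z => hn 1 * ((z-1)^2)⁻¹) hR0.le (continuousOn_const.mul (hsqcont hne1R)))]
      rw [circleIntegral.integral_const_mul, circleIntegral.integral_const_mul,
        hinv_R, hzero2 R]
      ring
    -- Step 7 : compute d1
    have hd1 : d1 = (m:ℂ) * (cw 1 * (starRingEnd ℂ) (c₁' 1)) + deriv hfun 1 := by
      have hder := (hasDerivAt_zpow m (1:ℂ) (Or.inl one_ne_zero)).mul hhdiff1.hasDerivAt
      have : deriv (fun z => z ^ m * hfun z) 1 = _ := hder.deriv
      rw [hd1def]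
      rw [show hn = fun z => z ^ m * hfun z from hhndef, this]
      rw [one_zpow, one_zpow, one_mul, mul_one]
      rw [hhfun]
      simp only []
      rw [htc₁'1]
    have hm' : (m:ℂ) = -(2*(n:ℂ)+1) := by
      rw [hm]
      push_cast
      ring
    -- assemble
    rw [E1, E2, E3, E4, E5, E6, hd1, hm']
    have hI1n : I₁ n = ∮ z in C(0,r), z ^ (2*n+1) * (c₁ z * tilde cw' z) * ((z-1)^2)⁻¹ := by
      rw [hI₁]
    have hI2n : I₂ n = ∮ z in C(0,R), hn z * ((z-1)^2)⁻¹ := by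
      rw [hI₂]
    rw [hI1n, hI2n, ← hhfun]
    ring
  have hlim1 : Filter.Tendsto I₁ Filter.atTop (𝓝 0) := by
    have hψcont : ContinuousOn (fun z : ℂ => (c₁ z * tilde cw' z) * ((z-1)^2)⁻¹)
        (sphere 0 r) :=
      ((hcont hsr hc₁).mul (hcont hsr (htilde _ hcw'))).mul (hsqcont hne1r)
    obtain ⟨C, hC⟩ := (isCompact_sphere (0:ℂ) r).exists_bound_of_continuousOn hψcont
    have hbound : ∀ n : ℕ, ‖I₁ n‖ ≤ 2 * Real.pi * r * (max C 0 * r ^ (2*n+1)) := by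
      intro n
      simp only [hI₁]
      apply circleIntegral.norm_integral_le_of_norm_le_const hr.le
      intro z hz
      have hzn : ‖z‖ = r := by rwa [mem_sphere, dist_zero_right] at hz
      calc ‖z ^ (2*n+1) * (c₁ z * tilde cw' z) * ((z-1)^2)⁻¹‖
          = ‖z‖ ^ (2*n+1) * ‖(c₁ z * tilde cw' z) * ((z-1)^2)⁻¹‖ := by
            rw [mul_assoc, norm_mul, norm_pow]
        _ ≤ r ^ (2*n+1) * max C 0 := by
            rw [hzn]
            exact mul_le_mul_of_nonneg_left (le_trans (hC z hz) (le_max_left _ _))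
              (pow_nonneg hr.le _)
        _ = max C 0 * r ^ (2*n+1) := mul_comm _ _
    have hrpow : Filter.Tendsto (fun n : ℕ => 2 * Real.pi * r * (max C 0 * r ^ (2*n+1)))
        Filter.atTop (𝓝 0) := by
      have h1 : Filter.Tendsto (fun k : ℕ => r ^ k) Filter.atTop (𝓝 0) :=
        tendsto_pow_atTop_nhds_zero_of_lt_one hr.le hr1
      have h2 : Filter.Tendsto (fun n : ℕ => 2*n+1) Filter.atTop Filter.atTop :=
        Filter.tendsto_atTop_mono (fun n => by simp only [id]; omega) Filter.tendsto_id
      have h3 := ((h1.comp h2).const_mul (max C 0)).const_mul (2 * Real.pi * r)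
      simpa [Function.comp] using h3
    exact squeeze_zero_norm hbound hrpow
  have hlim2 : Filter.Tendsto I₂ Filter.atTop (𝓝 0) := by
    have hψcont : ContinuousOn (fun z : ℂ => (cw z * tilde c₁' z) * ((z-1)^2)⁻¹)
        (sphere 0 R) :=
      ((hcont hsR hcw).mul (hcont hsR (htilde _ hc₁'))).mul (hsqcont hne1R)
    obtain ⟨C, hC⟩ := (isCompact_sphere (0:ℂ) R).exists_bound_of_continuousOn hψcont
    have hRz : ∀ n : ℕ, (R:ℝ) ^ (-(2*(n:ℤ)+1)) = r ^ (2*n+1) := by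
      intro n
      rw [hRdef, inv_zpow', neg_neg,
        show (2*(n:ℤ)+1) = ((2*n+1:ℕ):ℤ) by push_cast; ring, zpow_natCast]
    have hbound : ∀ n : ℕ, ‖I₂ n‖ ≤ 2 * Real.pi * R * (max C 0 * r ^ (2*n+1)) := by
      intro n
      simp only [hI₂]
      apply circleIntegral.norm_integral_le_of_norm_le_const hR0.le
      intro z hz
      have hzn : ‖z‖ = R := by rwa [mem_sphere, dist_zero_right] at hz
      calc ‖z ^ (-(2*(n:ℤ)+1)) * (cw z * tilde c₁' z) * ((z-1)^2)⁻¹‖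
          = ‖z‖ ^ (-(2*(n:ℤ)+1)) * ‖(cw z * tilde c₁' z) * ((z-1)^2)⁻¹‖ := by
            rw [mul_assoc, norm_mul, norm_zpow]
        _ ≤ r ^ (2*n+1) * max C 0 := by
            rw [hzn, hRz n]
            exact mul_le_mul_of_nonneg_left (le_trans (hC z hz) (le_max_left _ _))
              (pow_nonneg hr.le _)
        _ = max C 0 * r ^ (2*n+1) := mul_comm _ _
    have hrpow : Filter.Tendsto (fun n : ℕ => 2 * Real.pi * R * (max C 0 * r ^ (2*n+1)))
        Filter.atTop (𝓝 0) := by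
      have h1 : Filter.Tendsto (fun k : ℕ => r ^ k) Filter.atTop (𝓝 0) :=
        tendsto_pow_atTop_nhds_zero_of_lt_one hr.le hr1
      have h2 : Filter.Tendsto (fun n : ℕ => 2*n+1) Filter.atTop Filter.atTop :=
        Filter.tendsto_atTop_mono (fun n => by simp only [id]; omega) Filter.tendsto_id
      have h3 := ((h1.comp h2).const_mul (max C 0)).const_mul (2 * Real.pi * R)
      simpa [Function.comp] using h3
    exact squeeze_zero_norm hbound hrpow
  have := hlim1.add hlim2
  rw [add_zero] at this
  exact this.congr fun n => (key n).symm
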